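/- Let μ > 0 and let v : ℝ × [0,1] → ℝ be smooth, time-periodic, with v(t,0) = v(t,1) = 0 for all t. Then there exists M ≥ 0 such that every smooth time-periodic W : ℝ × [0,1] → ℝ with ∂_x W(t,0) = ∂_x W(t,1) = 0 for all t that solves ∂_t W − μ ∂²_x W + (1/2)(∂_x W)² + v ∂_x W = 0 on ℝ × [0,1] satisfies max_{(t,x)∈[0,1]²} W(t,x) − min_{(t,x)∈[0,1]²} W(t,x) ≤ M. -/

import Mathlib

open MeasureTheory
open Function Set Filter Topology


-- partial deriv in second variable equals fderiv applied to (0,1)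
lemma hasDerivAt_snd {F : ℝ → ℝ → ℝ} (hF : ContDiff ℝ (⊤:ℕ∞) (uncurry F)) (t x : ℝ) :
    HasDerivAt (F t) (fderiv ℝ (uncurry F) (t, x) (0, 1)) x := by
  have h1 : HasDerivAt (fun y : ℝ => ((t:ℝ), y)) ((0:ℝ), (1:ℝ)) x :=
    (hasDerivAt_const x t).prodMk (hasDerivAt_id x)
  have h2 := (hF.differentiable (by simp) (t, x)).hasFDerivAt
  exact (h2.comp_hasDerivAt x h1)

lemma hasDerivAt_fst {F : ℝ → ℝ → ℝ} (hF : ContDiff ℝ (⊤:ℕ∞) (uncurry F)) (t x : ℝ) :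
    HasDerivAt (fun s => F s x) (fderiv ℝ (uncurry F) (t, x) (1, 0)) t := by
  have h1 : HasDerivAt (fun s : ℝ => (s, x)) ((1:ℝ), (0:ℝ)) t :=
    (hasDerivAt_id t).prodMk (hasDerivAt_const t x)
  exact ((hF.differentiable (by simp) (t, x)).hasFDerivAt.comp_hasDerivAt t h1)

lemma contDiff_apply_fderiv {F : ℝ → ℝ → ℝ} (hF : ContDiff ℝ (⊤:ℕ∞) (uncurry F)) (w : ℝ × ℝ) :
    ContDiff ℝ (⊤:ℕ∞) (fun q : ℝ × ℝ => fderiv ℝ (uncurry F) q w) :=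
  (hF.fderiv_right (le_refl _)).clm_apply contDiff_const

lemma contDiff_pderiv_snd {F : ℝ → ℝ → ℝ} (hF : ContDiff ℝ (⊤:ℕ∞) (uncurry F)) :
    ContDiff ℝ (⊤:ℕ∞) (uncurry fun t x => deriv (F t) x) := by
  have : (uncurry fun t x => deriv (F t) x) = fun q : ℝ × ℝ => fderiv ℝ (uncurry F) q (0, 1) := by
    funext q
    exact (hasDerivAt_snd hF q.1 q.2).deriv
  rw [this]; exact contDiff_apply_fderiv hF _

lemma contDiff_pderiv_fst {F : ℝ → ℝ → ℝ} (hF : ContDiff ℝ (⊤:ℕ∞) (uncurry F)) :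
    ContDiff ℝ (⊤:ℕ∞) (uncurry fun t x => deriv (fun s => F s x) t) := by
  have : (uncurry fun t x => deriv (fun s => F s x) t)
      = fun q : ℝ × ℝ => fderiv ℝ (uncurry F) q (1, 0) := by
    funext q
    exact (hasDerivAt_fst hF q.1 q.2).deriv
  rw [this]; exact contDiff_apply_fderiv hF _

-- sections are smooth
lemma contDiff_section_snd {F : ℝ → ℝ → ℝ} (hF : ContDiff ℝ (⊤:ℕ∞) (uncurry F)) (t : ℝ) :
    ContDiff ℝ (⊤:ℕ∞) (F t) :=
  hF.comp (contDiff_const.prodMk contDiff_id)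

lemma contDiff_section_fst {F : ℝ → ℝ → ℝ} (hF : ContDiff ℝ (⊤:ℕ∞) (uncurry F)) (x : ℝ) :
    ContDiff ℝ (⊤:ℕ∞) (fun s => F s x) :=
  hF.comp (contDiff_id.prodMk contDiff_const)

lemma schwarz {F : ℝ → ℝ → ℝ} (hF : ContDiff ℝ (⊤:ℕ∞) (uncurry F)) (t x : ℝ) :
    deriv (fun y => deriv (fun s => F s y) t) x
      = deriv (fun s => deriv (F s) x) t := by
  set G := uncurry F with hG
  have hdiff : Differentiable ℝ G := hF.differentiable (by simp)
  have hΦ : ContDiff ℝ (⊤:ℕ∞) (fderiv ℝ G) := hF.fderiv_right (le_refl _)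
  have hΦd : Differentiable ℝ (fderiv ℝ G) := hΦ.differentiable (by simp)
  -- LHS
  have h1 : ∀ y, deriv (fun s => F s y) t = fderiv ℝ G (t, y) (1, 0) := by
    intro y
    have h1' : HasDerivAt (fun s : ℝ => (s, y)) ((1:ℝ), (0:ℝ)) t :=
      (hasDerivAt_id t).prodMk (hasDerivAt_const t y)
    exact ((hdiff (t, y)).hasFDerivAt.comp_hasDerivAt t h1').deriv
  have h2 : ∀ s, deriv (F s) x = fderiv ℝ G (s, x) (0, 1) := by
    intro s
    have h2' : HasDerivAt (fun y : ℝ => (s, y)) ((0:ℝ), (1:ℝ)) x :=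
      (hasDerivAt_const x s).prodMk (hasDerivAt_id x)
    exact ((hdiff (s, x)).hasFDerivAt.comp_hasDerivAt x h2').deriv
  have e1 : deriv (fun y => deriv (fun s => F s y) t) x
      = (fderiv ℝ (fderiv ℝ G) (t, x) (0, 1)) (1, 0) := by
    have : (fun y => deriv (fun s => F s y) t) = fun y => fderiv ℝ G (t, y) ((1:ℝ), (0:ℝ)) := by
      funext y; exact h1 y
    rw [this]
    have hc : HasDerivAt (fun y : ℝ => ((t:ℝ), y)) ((0:ℝ), (1:ℝ)) x :=
      (hasDerivAt_const x t).prodMk (hasDerivAt_id x)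
    have hcomp : HasDerivAt (fun y : ℝ => fderiv ℝ G (t, y))
        (fderiv ℝ (fderiv ℝ G) (t, x) (0, 1)) x :=
      (hΦd (t, x)).hasFDerivAt.comp_hasDerivAt x hc
    have := (hcomp.clm_apply (hasDerivAt_const x ((1:ℝ), (0:ℝ))))
    simpa using this.deriv
  have e2 : deriv (fun s => deriv (F s) x) t
      = (fderiv ℝ (fderiv ℝ G) (t, x) (1, 0)) (0, 1) := by
    have : (fun s => deriv (F s) x) = fun s => fderiv ℝ G (s, x) ((0:ℝ), (1:ℝ)) := by
      funext s; exact h2 s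
    rw [this]
    have hc : HasDerivAt (fun s : ℝ => (s, (x:ℝ))) ((1:ℝ), (0:ℝ)) t :=
      (hasDerivAt_id t).prodMk (hasDerivAt_const t x)
    have hcomp : HasDerivAt (fun s : ℝ => fderiv ℝ G (s, x))
        (fderiv ℝ (fderiv ℝ G) (t, x) (1, 0)) t :=
      (hΦd (t, x)).hasFDerivAt.comp_hasDerivAt t hc
    have := (hcomp.clm_apply (hasDerivAt_const t ((0:ℝ), (1:ℝ))))
    simpa using this.deriv
  rw [e1, e2]
  exact second_derivative_symmetric (fun y => (hdiff y).hasFDerivAt)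
    ((hΦd (t, x)).hasFDerivAt) _ _

-- second derivative test
lemma deriv2_nonpos_of_isLocalMax {f : ℝ → ℝ} {a : ℝ}
    (hf : ∀ x, DifferentiableAt ℝ f x) (hf' : DifferentiableAt ℝ (deriv f) a)
    (h : IsLocalMax f a) : deriv (deriv f) a ≤ 0 := by
  by_contra hpos
  push_neg at hpos
  have hga : deriv f a = 0 := h.deriv_eq_zero
  have hd : HasDerivAt (deriv f) (deriv (deriv f) a) a := hf'.hasDerivAt
  -- slope of deriv f tends to deriv (deriv f) a > 0, so deriv f > 0 just right of a
  have hslope := hasDerivAt_iff_tendsto_slope.mp hd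
  have hev : ∀ᶠ x in 𝓝[>] a, 0 < deriv f x := by
    have h1 : ∀ᶠ x in 𝓝[≠] a, 0 < slope (deriv f) a x :=
      hslope (Ioi_mem_nhds hpos)
    have h2 : ∀ᶠ x in 𝓝[>] a, 0 < slope (deriv f) a x :=
      h1.filter_mono (nhdsWithin_mono a fun x hx => ne_of_gt hx)
    filter_upwards [h2, self_mem_nhdsWithin] with x hx hx'
    have : slope (deriv f) a x = (deriv f x - deriv f a) / (x - a) := by
      simp [slope, div_eq_inv_mul]
    rw [this, hga, sub_zero] at hx
    have hxa : 0 < x - a := sub_pos.mpr hx'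
    nlinarith [mul_pos hx hxa, div_mul_cancel₀ (deriv f x) (ne_of_gt hxa)]
  -- also f x ≤ f a near a
  have hmax : ∀ᶠ x in 𝓝 a, f x ≤ f a := h
  obtain ⟨ε, hε, hball⟩ := Metric.eventually_nhds_iff.mp hmax
  obtain ⟨δ, hδ, hIoo⟩ := (mem_nhdsGT_iff_exists_Ioo_subset).mp hev
  set b := min (a + ε / 2) ((a + δ) / 2) with hb
  have haδ : a < δ := hδ
  have hab : a < b := by
    apply lt_min <;> linarith
  have hbδ : b < δ := by
    have := min_le_right (a + ε / 2) ((a + δ) / 2)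
    linarith
  have hbε : |b - a| < ε := by
    have h1 := min_le_left (a + ε / 2) ((a + δ) / 2)
    rw [abs_of_pos (by linarith : (0:ℝ) < b - a)]
    linarith
  obtain ⟨c, hc, hceq⟩ := exists_hasDerivAt_eq_slope f (deriv f) hab
    ((continuous_iff_continuousAt.mpr fun x => (hf x).continuousAt).continuousOn)
    (fun x _ => (hf x).hasDerivAt)
  · have hcpos : 0 < deriv f c := by
      apply hIoo; constructor
      · exact hc.1
      · exact lt_of_lt_of_le hc.2 (le_of_lt hbδ)
    have hfb : f b ≤ f a := hball hbε
    rw [hceq] at hcpos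
    have : (f b - f a) / (b - a) ≤ 0 :=
      div_nonpos_of_nonpos_of_nonneg (by linarith) (by linarith)
    linarith

lemma keyUpper (μ V Vx : ℝ) (hμ : 0 < μ) (p v : ℝ → ℝ → ℝ)
    (hp : ContDiff ℝ (⊤:ℕ∞) (uncurry p))
    (hpper : ∀ t x, p (t + 1) x = p t x)
    (hbc0 : ∀ t, p t 0 = 0) (hbc1 : ∀ t, p t 1 = 0)
    (hvV : ∀ t : ℝ, ∀ x ∈ Icc (0:ℝ) 1, |v t x| ≤ V)
    (hvx : ∀ t : ℝ, ∀ x ∈ Icc (0:ℝ) 1, |deriv (v t) x| ≤ Vx)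
    (hpde : ∀ t : ℝ, ∀ x ∈ Ioo (0:ℝ) 1,
      deriv (fun s => p s x) t - μ * deriv (deriv (p t)) x
        + (p t x + v t x) * deriv (p t) x + deriv (v t) x * p t x = 0) :
    ∀ t : ℝ, ∀ x ∈ Icc (0:ℝ) 1, p t x ≤ 3 * (μ + V + Vx) := by
  have hV : 0 ≤ V := le_trans (abs_nonneg _) (hvV 0 0 ⟨le_refl _, zero_le_one⟩)
  have hVx : 0 ≤ Vx := le_trans (abs_nonneg _) (hvx 0 0 ⟨le_refl _, zero_le_one⟩)
  set B := μ + V + Vx with hBdef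
  have hB : 0 < B := by positivity
  -- the auxiliary function r
  set r : ℝ → ℝ → ℝ := fun t x => Real.exp (-x) * p t x with hrdef
  have hrc : Continuous (uncurry r) := by
    have : (uncurry r) = fun q : ℝ × ℝ => Real.exp (-q.2) * uncurry p q := rfl
    rw [this]
    exact ((Real.continuous_exp.comp (continuous_snd.neg))).mul (hp.continuous)
  -- max over the compact square
  have hK : IsCompact ((Icc (0:ℝ) 1) ×ˢ (Icc (0:ℝ) 1)) :=
    (isCompact_Icc).prod isCompact_Icc
  have hKne : ((Icc (0:ℝ) 1) ×ˢ (Icc (0:ℝ) 1)).Nonempty :=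
    ⟨(0, 0), ⟨⟨le_refl _, zero_le_one⟩, ⟨le_refl _, zero_le_one⟩⟩⟩
  obtain ⟨z, hzK, hzmax⟩ := hK.exists_isMaxOn hKne (hrc.continuousOn)
  set t₀ := z.1 with ht₀
  set x₀ := z.2 with hx₀
  have hx₀I : x₀ ∈ Icc (0:ℝ) 1 := hzK.2
  set R := r t₀ x₀ with hRdef
  have hzR : uncurry r z = R := by simp [hRdef, uncurry, ht₀, hx₀]
  -- periodicity of r in t
  have hrper : ∀ x, Function.Periodic (fun s => r s x) 1 := by
    intro x s; simp only [hrdef]; rw [hpper]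
  -- global max property
  have hglob : ∀ s : ℝ, ∀ x ∈ Icc (0:ℝ) 1, r s x ≤ R := by
    intro s x hx
    obtain ⟨y, hy, hxy⟩ := (hrper x).exists_mem_Ico₀ one_pos s
    have : r y x ≤ R := by
      have := hzmax (a := (y, x)) ⟨⟨hy.1, le_of_lt hy.2⟩, hx⟩
      simpa [uncurry, hzR] using this
    calc r s x = r y x := by simpa using hxy
    _ ≤ R := this
  by_cases hR : R ≤ 0
  · -- r ≤ 0 everywhere hence p ≤ 0
    intro t x hx
    have h1 : Real.exp (-x) * p t x ≤ 0 := le_trans (hglob t x hx) hR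
    have h2 : 0 < Real.exp (-x) := Real.exp_pos _
    have h3 : p t x ≤ 0 := by
      by_contra hc
      push_neg at hc
      nlinarith [mul_pos h2 hc]
    nlinarith [h3, hB]
  · push_neg at hR
    -- the max point is interior in x
    have hx₀Ioo : x₀ ∈ Ioo (0:ℝ) 1 := by
      rcases hx₀I with ⟨h0, h1⟩
      constructor
      · rcases lt_or_eq_of_le h0 with h | h
        · exact h
        · exfalso
          have : r t₀ x₀ = 0 := by simp [hrdef, ← h, hbc0]
          rw [← hRdef] at this; linarith [hR, this]
      · rcases lt_or_eq_of_le h1 with h | h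
        · exact h
        · exfalso
          have : r t₀ x₀ = 0 := by simp [hrdef, h, hbc1]
          rw [← hRdef] at this; linarith [hR, this]
    set p₀ := p t₀ x₀ with hp₀def
    have hp₀pos : 0 < p₀ := by
      have : R = Real.exp (-x₀) * p₀ := rfl
      nlinarith [Real.exp_pos (-x₀), hR, this]
    -- derivative facts in x
    have hpsec : ContDiff ℝ (⊤:ℕ∞) (p t₀) := contDiff_section_snd hp t₀
    have hpd : Differentiable ℝ (p t₀) := hpsec.differentiable (by simp)
    have hpderiv : ContDiff ℝ (⊤:ℕ∞) (deriv (p t₀)) := (contDiff_infty_iff_deriv.mp hpsec).2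
    have hpderivd : Differentiable ℝ (deriv (p t₀)) :=
      hpderiv.differentiable (by simp)
    have hexp : ∀ x : ℝ, HasDerivAt (fun y : ℝ => Real.exp (-y)) (-Real.exp (-x)) x := by
      intro x
      have h1 : HasDerivAt (fun y : ℝ => -y) (-1 : ℝ) x := (hasDerivAt_id x).neg
      have := (Real.hasDerivAt_exp (-x)).comp x h1
      simpa [Function.comp_def] using this
    have hg' : ∀ x : ℝ, HasDerivAt (r t₀)
        (Real.exp (-x) * (deriv (p t₀) x - p t₀ x)) x := by
      intro x
      have := (hexp x).mul ((hpd x).hasDerivAt)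
      exact this.congr_deriv (by ring)
    have hgderiv : deriv (r t₀) = fun x => Real.exp (-x) * (deriv (p t₀) x - p t₀ x) :=
      funext fun x => (hg' x).deriv
    -- local max in x at x₀
    have hmaxsec : IsMaxOn (r t₀) (Icc 0 1) x₀ := by
      intro x hx
      exact hglob t₀ x hx
    have hloc : IsLocalMax (r t₀) x₀ := hmaxsec.isLocalMax (Icc_mem_nhds hx₀Ioo.1 hx₀Ioo.2)
    have h1 : deriv (r t₀) x₀ = 0 := hloc.deriv_eq_zero
    have hpx : deriv (p t₀) x₀ = p₀ := by
      rw [hgderiv] at h1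
      rcases mul_eq_zero.mp h1 with h | h
      · exact absurd h (ne_of_gt (Real.exp_pos _))
      · linarith [h]
    -- second derivative at x₀
    have hg'' : HasDerivAt (deriv (r t₀))
        (Real.exp (-x₀) * (deriv (deriv (p t₀)) x₀ - 2 * deriv (p t₀) x₀ + p t₀ x₀)) x₀ := by
      rw [hgderiv]
      have h2 : HasDerivAt (fun x => deriv (p t₀) x - p t₀ x)
          (deriv (deriv (p t₀)) x₀ - deriv (p t₀) x₀) x₀ :=
        ((hpderivd x₀).hasDerivAt).sub ((hpd x₀).hasDerivAt)
      have := (hexp x₀).mul h2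
      exact this.congr_deriv (by ring)
    have h2 : deriv (deriv (r t₀)) x₀ ≤ 0 := by
      apply deriv2_nonpos_of_isLocalMax (fun x => (hg' x).differentiableAt) _ hloc
      exact hg''.differentiableAt
    have hpxx : deriv (deriv (p t₀)) x₀ ≤ p₀ := by
      rw [hg''.deriv] at h2
      have hepos := Real.exp_pos (-x₀)
      rw [hpx] at h2
      nlinarith [h2, hepos]
    -- time derivative zero
    have htmax : IsLocalMax (fun s => r s x₀) t₀ := by
      have : IsMaxOn (fun s => r s x₀) univ t₀ := fun s _ => hglob s x₀ (Ioo_subset_Icc_self hx₀Ioo)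
      exact this.isLocalMax univ_mem
    have htd : deriv (fun s => r s x₀) t₀ = 0 := htmax.deriv_eq_zero
    have hptd : Differentiable ℝ (fun s => p s x₀) :=
      (contDiff_section_fst hp x₀).differentiable (by simp)
    have hpt : deriv (fun s => p s x₀) t₀ = 0 := by
      have : (fun s => r s x₀) = fun s => Real.exp (-x₀) * p s x₀ := rfl
      rw [this, deriv_const_mul _ (hptd t₀)] at htd
      have := Real.exp_pos (-x₀)
      rcases mul_eq_zero.mp htd with h | h
      · linarith
      · exact h
    -- plug into the PDE
    have heq := hpde t₀ x₀ hx₀Ioo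
    rw [hpt, hpx] at heq
    set v₀ := v t₀ x₀ with hv₀
    set vx₀ := deriv (v t₀) x₀ with hvx₀
    have hv₀b : |v₀| ≤ V := hvV t₀ x₀ (Ioo_subset_Icc_self hx₀Ioo)
    have hvx₀b : |vx₀| ≤ Vx := hvx t₀ x₀ (Ioo_subset_Icc_self hx₀Ioo)
    have hp₀B : p₀ ≤ B := by
      have h3 : 0 - μ * deriv (deriv (p t₀)) x₀ + (p₀ + v₀) * p₀ + vx₀ * p₀ = 0 := heq
      have h4 : μ * deriv (deriv (p t₀)) x₀ ≤ μ * p₀ :=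
        mul_le_mul_of_nonneg_left hpxx (le_of_lt hμ)
      have h5 : (p₀ + v₀) * p₀ + vx₀ * p₀ ≤ μ * p₀ := by linarith
      have h6 : -V ≤ v₀ := neg_le_of_abs_le hv₀b
      have h7 : -Vx ≤ vx₀ := neg_le_of_abs_le hvx₀b
      nlinarith [h5, h6, h7, hp₀pos]
    -- conclude
    have hRp₀ : R ≤ p₀ := by
      have h8 : Real.exp (-x₀) ≤ 1 := Real.exp_le_one_iff.mpr (by linarith [hx₀Ioo.1])
      have h9 : R = Real.exp (-x₀) * p₀ := rfl
      nlinarith [Real.exp_pos (-x₀)]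
    have hpeqall : ∀ s y : ℝ, p s y = Real.exp y * r s y := by
      intro s y
      simp only [hrdef]
      rw [← mul_assoc, ← Real.exp_add]
      simp
    have hglob' : ∀ s x : ℝ, x ∈ Icc (0:ℝ) 1 → r s x ≤ R := hglob
    clear_value p₀ R r B
    intro t x hx
    have hr1 : r t x ≤ R := hglob' t x hx
    have hexp1 : Real.exp x ≤ Real.exp 1 := Real.exp_le_exp.mpr hx.2
    have hexp3 : Real.exp 1 < 3 := by
      have := Real.exp_one_lt_d9
      linarith
    rw [hpeqall t x]
    have hexppos := Real.exp_pos x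
    have hp₀B3 : 3 * p₀ ≤ 3 * B := by linarith
    rcases le_or_gt (r t x) 0 with h | h
    · have h10 : Real.exp x * r t x ≤ 0 := mul_nonpos_of_nonneg_of_nonpos (le_of_lt hexppos) h
      have h11 : (0:ℝ) ≤ 3 * B := by linarith
      linarith
    · have hRpos : 0 < R := lt_of_lt_of_le h hr1
      have s1 : Real.exp x * r t x ≤ Real.exp x * R :=
        mul_le_mul_of_nonneg_left hr1 (le_of_lt hexppos)
      have s2 : Real.exp x * R ≤ Real.exp 1 * R :=
        mul_le_mul_of_nonneg_right hexp1 (le_of_lt hRpos)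
      have s3 : Real.exp 1 * R ≤ 3 * R := mul_le_mul_of_nonneg_right (le_of_lt hexp3) (le_of_lt hRpos)
      have s4 : 3 * R ≤ 3 * p₀ := by linarith
      linarith

lemma reflect_deriv {f : ℝ → ℝ} (hf : Differentiable ℝ f) (x : ℝ) :
    HasDerivAt (fun y => -f (1 - y)) (deriv f (1 - x)) x := by
  have h1 : HasDerivAt (fun y : ℝ => 1 - y) (-1 : ℝ) x := by
    simpa using (hasDerivAt_id x).const_sub (1:ℝ)
  have h2 := ((hf (1 - x)).hasDerivAt).comp x h1
  have h3 := h2.neg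
  exact h3.congr_deriv (by ring)

lemma keyLower (μ V Vx : ℝ) (hμ : 0 < μ) (p v : ℝ → ℝ → ℝ)
    (hp : ContDiff ℝ (⊤:ℕ∞) (uncurry p))
    (hpper : ∀ t x, p (t + 1) x = p t x)
    (hbc0 : ∀ t, p t 0 = 0) (hbc1 : ∀ t, p t 1 = 0)
    (hvd : ∀ t : ℝ, Differentiable ℝ (v t))
    (hvV : ∀ t : ℝ, ∀ x ∈ Icc (0:ℝ) 1, |v t x| ≤ V)
    (hvx : ∀ t : ℝ, ∀ x ∈ Icc (0:ℝ) 1, |deriv (v t) x| ≤ Vx)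
    (hpde : ∀ t : ℝ, ∀ x ∈ Ioo (0:ℝ) 1,
      deriv (fun s => p s x) t - μ * deriv (deriv (p t)) x
        + (p t x + v t x) * deriv (p t) x + deriv (v t) x * p t x = 0) :
    ∀ t : ℝ, ∀ x ∈ Icc (0:ℝ) 1, -(3 * (μ + V + Vx)) ≤ p t x := by
  set pr : ℝ → ℝ → ℝ := fun t x => -p t (1 - x) with hprdef
  set vr : ℝ → ℝ → ℝ := fun t x => -v t (1 - x) with hvrdef
  have hpd : ∀ t, Differentiable ℝ (p t) := fun t =>
    (contDiff_section_snd hp t).differentiable (by simp)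
  have hpdd : ∀ t, Differentiable ℝ (deriv (p t)) := fun t =>
    ((contDiff_infty_iff_deriv.mp (contDiff_section_snd hp t)).2).differentiable
      (by simp)
  -- derivative identities for the reflected functions
  have hder1 : ∀ t x, deriv (pr t) x = deriv (p t) (1 - x) := by
    intro t x
    exact (reflect_deriv (hpd t) x).deriv
  have hderfun : ∀ t, deriv (pr t) = fun x => deriv (p t) (1 - x) :=
    fun t => funext fun x => hder1 t x
  have hder2 : ∀ t x, deriv (deriv (pr t)) x = -deriv (deriv (p t)) (1 - x) := by
    intro t x
    rw [hderfun t]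
    have h1 : HasDerivAt (fun y : ℝ => 1 - y) (-1 : ℝ) x := by
      simpa using (hasDerivAt_id x).const_sub (1:ℝ)
    have h2 : HasDerivAt (fun y => deriv (p t) (1 - y)) (deriv (deriv (p t)) (1 - x) * -1) x :=
      ((hpdd t (1 - x)).hasDerivAt).comp x h1
    rw [h2.deriv]
    ring
  have hdervr : ∀ t x, deriv (vr t) x = deriv (v t) (1 - x) := by
    intro t x
    exact (reflect_deriv (hvd t) x).deriv
  have hdert : ∀ t x, deriv (fun s => pr s x) t = -deriv (fun s => p s (1 - x)) t := by
    intro t x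
    have h1 : (fun s => pr s x) = fun s => -p s (1 - x) := rfl
    rw [h1, deriv.fun_neg]
  -- apply keyUpper to the reflected data
  have hKU := keyUpper μ V Vx hμ pr vr
    (by
      have : uncurry pr = fun q : ℝ × ℝ => -(uncurry p (q.1, 1 - q.2)) := rfl
      rw [this]
      exact (hp.comp (contDiff_fst.prodMk (contDiff_const.sub contDiff_snd))).neg)
    (fun t x => by simp only [hprdef]; rw [hpper])
    (fun t => by simp only [hprdef]; simp [hbc1])
    (fun t => by simp only [hprdef]; simp [hbc0])
    (fun t x hx => by
      simp only [hvrdef, abs_neg]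
      exact hvV t (1 - x) ⟨by linarith [hx.2], by linarith [hx.1]⟩)
    (fun t x hx => by
      rw [hdervr]
      exact hvx t (1 - x) ⟨by linarith [hx.2], by linarith [hx.1]⟩)
    (fun t x hx => by
      have hy : (1 - x) ∈ Ioo (0:ℝ) 1 := ⟨by linarith [hx.2], by linarith [hx.1]⟩
      have horig := hpde t (1 - x) hy
      rw [hdert, hder2, hdervr, hder1]
      have hprval : pr t x = -p t (1 - x) := rfl
      have hvrval : vr t x = -v t (1 - x) := rfl
      rw [hprval, hvrval]
      linarith [horig])
  intro t x hx
  have := hKU t (1 - x) ⟨by linarith [hx.2], by linarith [hx.1]⟩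
  have hval : pr t (1 - x) = -p t (1 - (1 - x)) := rfl
  rw [hval] at this
  have : -p t x ≤ 3 * (μ + V + Vx) := by
    have hxx : (1 : ℝ) - (1 - x) = x := by ring
    rwa [hxx] at this
  linarith


/-- Lemma 6.9 (classical form): for fixed `μ > 0` and `v` smooth, time-periodic, vanishing at
`x = 0,1`, the set of smooth time-periodic Neumann solutions `W` of the quadratic
Hamilton–Jacobi equation `W_t − μ W_xx + ½ (W_x)² + v W_x = 0` is bounded in `C⁰([0,1]²)`
modulo additive constants: the oscillation `max W − min W` over `[0,1]²` is uniformly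
bounded. -/
theorem hamilton_jacobi_oscillation_bound (μ : ℝ) (hμ : 0 < μ)
    (v : ℝ → ℝ → ℝ) (hv : ContDiff ℝ (⊤ : ℕ∞) (Function.uncurry v))
    (hvper : ∀ t x : ℝ, v (t + 1) x = v t x)
    (hvbc : ∀ t : ℝ, v t 0 = 0 ∧ v t 1 = 0) :
    ∃ M : ℝ, 0 ≤ M ∧ ∀ W : ℝ → ℝ → ℝ,
      ContDiff ℝ (⊤ : ℕ∞) (Function.uncurry W) →
      (∀ t x : ℝ, W (t + 1) x = W t x) →
      (∀ t : ℝ, deriv (W t) 0 = 0 ∧ deriv (W t) 1 = 0) →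
      (∀ t : ℝ, ∀ x ∈ Set.Icc (0:ℝ) 1,
        deriv (fun s => W s x) t - μ * deriv (deriv (W t)) x
          + (1 / 2) * (deriv (W t) x) ^ 2 + v t x * deriv (W t) x = 0) →
      ∀ t ∈ Set.Icc (0:ℝ) 1, ∀ x ∈ Set.Icc (0:ℝ) 1,
        ∀ t' ∈ Set.Icc (0:ℝ) 1, ∀ x' ∈ Set.Icc (0:ℝ) 1,
          W t x - W t' x' ≤ M := by
  classical
  have hK : IsCompact ((Icc (0:ℝ) 1) ×ˢ (Icc (0:ℝ) 1)) := isCompact_Icc.prod isCompact_Icc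
  -- bound on v
  obtain ⟨V₀, hV₀⟩ := hK.exists_bound_of_continuousOn (hv.continuous.continuousOn)
  set V : ℝ := max V₀ 0 with hVdef
  have hVnn : 0 ≤ V := le_max_right _ _
  have hvV : ∀ t : ℝ, ∀ x ∈ Icc (0:ℝ) 1, |v t x| ≤ V := by
    intro t x hx
    have hper : Function.Periodic (fun s => v s x) 1 := fun s => hvper s x
    obtain ⟨y, hy, hxy⟩ := hper.exists_mem_Ico₀ one_pos t
    have h1 : v t x = v y x := by simpa using hxy
    rw [h1]
    calc |v y x| = ‖uncurry v (y, x)‖ := rfl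
      _ ≤ V₀ := hV₀ (y, x) ⟨⟨hy.1, hy.2.le⟩, hx⟩
      _ ≤ V := le_max_left _ _
  -- bound on ∂ₓ v
  have hvdc : ContDiff ℝ (⊤:ℕ∞) (uncurry fun t x => deriv (v t) x) := contDiff_pderiv_snd hv
  obtain ⟨Vx₀, hVx₀⟩ := hK.exists_bound_of_continuousOn (hvdc.continuous.continuousOn)
  set Vx : ℝ := max Vx₀ 0 with hVxdef
  have hVxnn : 0 ≤ Vx := le_max_right _ _
  have hvx : ∀ t : ℝ, ∀ x ∈ Icc (0:ℝ) 1, |deriv (v t) x| ≤ Vx := by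
    intro t x hx
    have hper : Function.Periodic (fun s => deriv (v s) x) 1 := by
      intro s
      have : v (s + 1) = v s := funext (hvper s)
      simp only [this]
    obtain ⟨y, hy, hxy⟩ := hper.exists_mem_Ico₀ one_pos t
    have h1 : deriv (v t) x = deriv (v y) x := by simpa using hxy
    rw [h1]
    calc |deriv (v y) x| = ‖uncurry (fun t x => deriv (v t) x) (y, x)‖ := rfl
      _ ≤ Vx₀ := hVx₀ (y, x) ⟨⟨hy.1, hy.2.le⟩, hx⟩
      _ ≤ Vx := le_max_left _ _
  have hvd : ∀ t : ℝ, Differentiable ℝ (v t) := fun t =>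
    (contDiff_section_snd hv t).differentiable (by simp)
  -- the constants
  set B3 : ℝ := 3 * (μ + V + Vx) with hB3def
  have hB3pos : 0 < B3 := by positivity
  set D : ℝ := (1/2) * B3^2 + V * B3 with hDdef
  have hDnn : 0 ≤ D := by positivity
  refine ⟨B3 + D + B3, by positivity, ?_⟩
  intro W hW hWper hWbc hWpde t ht x hx t' ht' x' hx'
  -- smoothness consequences
  have hWsec : ∀ s : ℝ, ContDiff ℝ (⊤:ℕ∞) (W s) := fun s => contDiff_section_snd hW s
  have hWd : ∀ s : ℝ, Differentiable ℝ (W s) := fun s =>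
    (hWsec s).differentiable (by simp)
  have hdWc : ∀ s : ℝ, ContDiff ℝ (⊤:ℕ∞) (deriv (W s)) := fun s =>
    (contDiff_infty_iff_deriv.mp (hWsec s)).2
  have hdWd : ∀ s : ℝ, Differentiable ℝ (deriv (W s)) := fun s =>
    (hdWc s).differentiable (by simp)
  have hd2Wc : ∀ s : ℝ, ContDiff ℝ (⊤:ℕ∞) (deriv (deriv (W s))) := fun s =>
    (contDiff_infty_iff_deriv.mp (hdWc s)).2
  have hd2Wd : ∀ s : ℝ, Differentiable ℝ (deriv (deriv (W s))) := fun s =>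
    (hd2Wc s).differentiable (by simp)
  -- the space derivative p
  have hPc : ContDiff ℝ (⊤:ℕ∞) (uncurry fun s y => deriv (W s) y) := contDiff_pderiv_snd hW
  have hPper : ∀ s y : ℝ, deriv (W (s + 1)) y = deriv (W s) y := by
    intro s y
    have : W (s + 1) = W s := funext (hWper s)
    rw [this]
  -- the time derivative
  set Qw : ℝ → ℝ → ℝ := fun s y => deriv (fun τ => W τ y) s with hQwdef
  have hQc : ContDiff ℝ (⊤:ℕ∞) (uncurry Qw) := contDiff_pderiv_fst hW
  have hWtd : ∀ y : ℝ, Differentiable ℝ (fun s => W s y) := fun y =>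
    (contDiff_section_fst hW y).differentiable (by simp)
  -- the differentiated PDE
  have hpdeP : ∀ s : ℝ, ∀ y ∈ Ioo (0:ℝ) 1,
      deriv (fun τ => deriv (W τ) y) s - μ * deriv (deriv (deriv (W s))) y
        + (deriv (W s) y + v s y) * deriv (deriv (W s)) y
        + deriv (v s) y * deriv (W s) y = 0 := by
    intro s y₀ hy₀
    set G : ℝ → ℝ := fun y => Qw s y - μ * deriv (deriv (W s)) y
      + (1/2) * (deriv (W s) y)^2 + v s y * deriv (W s) y with hGdef
    have hGzero : ∀ y ∈ Icc (0:ℝ) 1, G y = 0 := fun y hy => hWpde s y hy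
    have hGev : G =ᶠ[nhds y₀] fun _ => 0 := by
      filter_upwards [Ioo_mem_nhds hy₀.1 hy₀.2] with y hy
      exact hGzero y (Ioo_subset_Icc_self hy)
    have hGderiv0 : deriv G y₀ = 0 := by
      rw [hGev.deriv_eq]
      simp
    -- derivative of each piece
    have h1 : HasDerivAt (Qw s) (deriv (Qw s) y₀) y₀ :=
      (((contDiff_section_snd hQc s).differentiable (by simp)) y₀).hasDerivAt
    have h2 : HasDerivAt (fun y => μ * deriv (deriv (W s)) y)
        (μ * deriv (deriv (deriv (W s))) y₀) y₀ :=
      ((hd2Wd s y₀).hasDerivAt).const_mul μ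
    have h3 : HasDerivAt (fun y => (1/2) * (deriv (W s) y)^2)
        ((1/2) * (2 * deriv (W s) y₀ * deriv (deriv (W s)) y₀)) y₀ := by
      have := (((hdWd s) y₀).hasDerivAt).pow 2
      have h3' := this.const_mul (1/2 : ℝ)
      exact h3'.congr_deriv (by ring)
    have h4 : HasDerivAt (fun y => v s y * deriv (W s) y)
        (deriv (v s) y₀ * deriv (W s) y₀ + v s y₀ * deriv (deriv (W s)) y₀) y₀ :=
      (((hvd s) y₀).hasDerivAt).mul (((hdWd s) y₀).hasDerivAt)
    have hGd : HasDerivAt G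
        (deriv (Qw s) y₀ - μ * deriv (deriv (deriv (W s))) y₀
          + (1/2) * (2 * deriv (W s) y₀ * deriv (deriv (W s)) y₀)
          + (deriv (v s) y₀ * deriv (W s) y₀ + v s y₀ * deriv (deriv (W s)) y₀)) y₀ :=
      ((h1.sub h2).add h3).add h4
    have hGval := hGd.deriv
    rw [hGderiv0] at hGval
    -- Schwarz symmetry
    have hsym : deriv (Qw s) y₀ = deriv (fun τ => deriv (W τ) y₀) s := schwarz hW s y₀
    rw [hsym] at hGval
    linarith [hGval]
  -- gradient bound
  have hPbound : ∀ s : ℝ, ∀ y ∈ Icc (0:ℝ) 1, |deriv (W s) y| ≤ B3 := by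
    intro s y hy
    have hup := keyUpper μ V Vx hμ (fun s y => deriv (W s) y) v hPc hPper
      (fun s => (hWbc s).1) (fun s => (hWbc s).2) hvV hvx
      (fun s y hy => hpdeP s y hy) s y hy
    have hlo := keyLower μ V Vx hμ (fun s y => deriv (W s) y) v hPc hPper
      (fun s => (hWbc s).1) (fun s => (hWbc s).2) hvd hvV hvx
      (fun s y hy => hpdeP s y hy) s y hy
    rw [abs_le]
    exact ⟨by linarith [hlo], by linarith [hup]⟩
  -- spatial oscillation bound
  have hxosc : ∀ s : ℝ, ∀ a ∈ Icc (0:ℝ) 1, ∀ b ∈ Icc (0:ℝ) 1, |W s a - W s b| ≤ B3 := by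
    intro s a ha b hb
    have := Convex.norm_image_sub_le_of_norm_deriv_le (f := W s) (s := Icc 0 1)
      (fun y _ => (hWd s) y) (fun y hy => by
        rw [Real.norm_eq_abs]; exact hPbound s y hy) (convex_Icc 0 1) hb ha
    have hab : ‖a - b‖ ≤ 1 := by
      rw [Real.norm_eq_abs, abs_le]
      constructor <;> [linarith [ha.1, hb.2]; linarith [ha.2, hb.1]]
    rw [Real.norm_eq_abs] at this
    nlinarith [this, hab, hB3pos, abs_nonneg (a - b), Real.norm_eq_abs (a-b)]
  -- the space average A
  set A : ℝ → ℝ := fun s => ∫ y in (0:ℝ)..1, W s y with hAdef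
  have hA' : ∀ s₀ : ℝ, HasDerivAt A (∫ y in (0:ℝ)..1, Qw s₀ y) s₀ := by
    intro s₀
    have hKc : IsCompact ((Icc (s₀ - 1) (s₀ + 1)) ×ˢ (Icc (0:ℝ) 1)) :=
      isCompact_Icc.prod isCompact_Icc
    obtain ⟨C, hC⟩ := hKc.exists_bound_of_continuousOn (hQc.continuous.continuousOn)
    have key := intervalIntegral.hasDerivAt_integral_of_dominated_loc_of_deriv_le
      (F := fun s y => W s y) (F' := Qw) (x₀ := s₀) (a := (0:ℝ)) (b := 1)
      (bound := fun _ => C) (μ := volume) (s := Metric.ball s₀ 1) (Metric.ball_mem_nhds s₀ one_pos)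
      (Filter.Eventually.of_forall fun s => ((hWsec s).continuous).aestronglyMeasurable)
      (((hWsec s₀).continuous).intervalIntegrable 0 1)
      (((contDiff_section_snd hQc s₀).continuous).aestronglyMeasurable)
      (Filter.Eventually.of_forall ?_)
      (intervalIntegrable_const)
      (Filter.Eventually.of_forall ?_)
    · exact key.2
    · intro y hy s hs
      apply hC (s, y)
      refine ⟨?_, ?_⟩
      · simp only [Metric.mem_ball, Real.dist_eq] at hs
        have := abs_lt.mp hs
        exact ⟨by linarith [this.1], by linarith [this.2]⟩
      · rw [Set.uIoc_of_le zero_le_one] at hy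
        exact ⟨hy.1.le, hy.2⟩
    · intro y _ s _
      exact ((hWtd y) s).hasDerivAt
  -- identify the derivative of A using the PDE
  have hQint : ∀ s : ℝ, (∫ y in (0:ℝ)..1, Qw s y)
      = - ∫ y in (0:ℝ)..1, ((1/2) * (deriv (W s) y)^2 + v s y * deriv (W s) y) := by
    intro s
    have hEq : EqOn (Qw s)
        (fun y => μ * deriv (deriv (W s)) y
          - ((1/2) * (deriv (W s) y)^2 + v s y * deriv (W s) y)) (Set.uIcc 0 1) := by
      intro y hy
      rw [Set.uIcc_of_le zero_le_one] at hy
      have := hWpde s y hy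
      simp only [hQwdef]
      linarith [this]
    rw [intervalIntegral.integral_congr hEq]
    have hint1 : IntervalIntegrable (fun y => μ * deriv (deriv (W s)) y) volume 0 1 :=
      ((continuous_const.mul ((hd2Wc s).continuous)).intervalIntegrable 0 1)
    have hint2 : IntervalIntegrable
        (fun y => (1/2) * (deriv (W s) y)^2 + v s y * deriv (W s) y) volume 0 1 := by
      apply Continuous.intervalIntegrable
      exact (continuous_const.mul ((hdWc s).continuous.pow 2)).add
        (((contDiff_section_snd hv s).continuous).mul ((hdWc s).continuous))
    rw [intervalIntegral.integral_sub hint1 hint2]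
    have h2 : (∫ y in (0:ℝ)..1, μ * deriv (deriv (W s)) y)
        = μ * (deriv (W s) 1 - deriv (W s) 0) := by
      rw [intervalIntegral.integral_const_mul]
      congr 1
      exact intervalIntegral.integral_deriv_eq_sub (fun y _ => (hdWd s) y)
        (((hd2Wc s).continuous).intervalIntegrable 0 1)
    rw [h2, (hWbc s).1, (hWbc s).2]
    ring
  -- derivative bound for A
  have hAbound : ∀ s : ℝ, ‖deriv A s‖ ≤ D := by
    intro s
    rw [(hA' s).deriv, hQint s, norm_neg]
    have := intervalIntegral.norm_integral_le_of_norm_le_const (a := (0:ℝ)) (b := 1) (C := D)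
      (f := fun y => (1/2) * (deriv (W s) y)^2 + v s y * deriv (W s) y) ?_
    · simpa using this
    · intro y hy
      rw [Set.uIoc_of_le zero_le_one] at hy
      have hyI : y ∈ Icc (0:ℝ) 1 := ⟨hy.1.le, hy.2⟩
      have hp := hPbound s y hyI
      have hv' := hvV s y hyI
      rw [Real.norm_eq_abs]
      have habs : |(1/2) * (deriv (W s) y)^2 + v s y * deriv (W s) y|
          ≤ (1/2) * (deriv (W s) y)^2 + |v s y * deriv (W s) y| := by
        calc |(1/2) * (deriv (W s) y)^2 + v s y * deriv (W s) y|
            ≤ |(1/2) * (deriv (W s) y)^2| + |v s y * deriv (W s) y| := abs_add_le _ _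
          _ = (1/2) * (deriv (W s) y)^2 + |v s y * deriv (W s) y| := by
              rw [abs_of_nonneg (by positivity)]
      have hsq : (deriv (W s) y)^2 ≤ B3^2 := by
        have := sq_abs (deriv (W s) y)
        nlinarith [hp, abs_nonneg (deriv (W s) y)]
      have hmul : |v s y * deriv (W s) y| ≤ V * B3 := by
        rw [abs_mul]
        exact mul_le_mul hv' hp (abs_nonneg _) hVnn
      simp only [hDdef]
      linarith [habs, hsq, hmul]
  -- A is Lipschitz with constant D
  have hAlip : |A t - A t'| ≤ D := by
    have := Convex.norm_image_sub_le_of_norm_deriv_le (f := A) (s := (Set.univ : Set ℝ))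
      (fun s _ => (hA' s).differentiableAt) (fun s _ => hAbound s) convex_univ
      (Set.mem_univ t') (Set.mem_univ t)
    have htt : ‖t - t'‖ ≤ 1 := by
      rw [Real.norm_eq_abs, abs_le]
      constructor <;> [linarith [ht.1, ht'.2]; linarith [ht.2, ht'.1]]
    rw [Real.norm_eq_abs] at this
    nlinarith [this, htt, hDnn, abs_nonneg (t - t'), Real.norm_eq_abs (t - t')]
  -- W close to its average
  have hWA : ∀ s : ℝ, ∀ a ∈ Icc (0:ℝ) 1, |W s a - A s| ≤ B3 := by
    intro s a ha
    have h1 : (∫ y in (0:ℝ)..1, (W s a - W s y)) = W s a - A s := by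
      rw [intervalIntegral.integral_sub (intervalIntegrable_const)
        (((hWsec s).continuous).intervalIntegrable 0 1)]
      simp [hAdef]
    rw [← h1]
    have h2 := intervalIntegral.norm_integral_le_of_norm_le_const (a := (0:ℝ)) (b := 1)
      (C := B3) (f := fun y => W s a - W s y) ?_
    · rw [Real.norm_eq_abs] at h2
      simpa using h2
    · intro y hy
      rw [Set.uIoc_of_le zero_le_one] at hy
      rw [Real.norm_eq_abs]
      exact hxosc s a ha y ⟨hy.1.le, hy.2⟩
  -- final assembly
  have e1 := hWA t x hx
  have e2 := hWA t' x' hx'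
  have e3 := hAlip
  rw [abs_le] at e1 e2 e3
  linarith [e1.1, e1.2, e2.1, e2.2, e3.1, e3.2]
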